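/- arXiv:2207.01365 — 9 statements merged into one kernel-verified Lean document; each statement's English description precedes it below -/
import Mathlib

section
/- Let n ≥ 2 be an even positive integer and let x_1 ≤ x_2 ≤ ... ≤ x_n be real numbers that are not all equal. Then for every real number p ≥ 1, the sum over all pairs 1 ≤ i < j ≤ n of |x_i - x_j|^p is at most (n²/4)·(x_n - x_1)^p. -/
open Finset

lemma pairsum_eq (x : ℕ → ℝ) (n : ℕ) :
    ∑ i ∈ range n, ∑ j ∈ range n, (if i < j then x j - x i else 0)
      = ∑ k ∈ range n, ((2 * k + 1 : ℝ) - n) * x k := by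
  induction n with
  | zero => simp
  | succ n ih =>
    rw [Finset.sum_range_succ]
    have h1 : ∑ j ∈ Finset.range (n+1), (if n < j then x j - x n else 0) = 0 := by
      apply Finset.sum_eq_zero
      intro j hj
      rw [if_neg]
      have := Finset.mem_range.mp hj
      omega
    rw [h1, add_zero]
    have h2 : ∀ i ∈ Finset.range n,
        ∑ j ∈ Finset.range (n+1), (if i < j then x j - x i else 0)
          = (∑ j ∈ Finset.range n, (if i < j then x j - x i else 0)) + (x n - x i) := by
      intro i hi
      rw [Finset.sum_range_succ, if_pos (Finset.mem_range.mp hi)]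
    rw [Finset.sum_congr rfl h2, Finset.sum_add_distrib, ih, Finset.sum_range_succ,
      Finset.sum_sub_distrib, Finset.sum_const, Finset.card_range, nsmul_eq_mul]
    have h3 : ∀ k ∈ Finset.range n,
        ((2 * k + 1 : ℝ) - (n+1 : ℕ)) * x k = ((2 * k + 1 : ℝ) - n) * x k - x k := by
      intro k hk; push_cast; ring
    rw [Finset.sum_congr rfl h3, Finset.sum_sub_distrib]
    push_cast
    ring

lemma oddsum (m : ℕ) : ∑ k ∈ range m, (2 * (k : ℝ) + 1) = (m : ℝ) ^ 2 := by
  induction m with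
  | zero => simp
  | succ m ih => rw [Finset.sum_range_succ, ih]; push_cast; ring

/-- For `n ≥ 2` even and `x_1 ≤ ⋯ ≤ x_n` (0-indexed `x 0 ≤ ⋯ ≤ x (n-1)`)
real numbers not all equal, for every real `p ≥ 1`,
`∑_{i<j} |x i - x j|^p ≤ (n²/4) (x (n-1) - x 0)^p`. -/
theorem range_type_upper_bound_even
    (n : ℕ) (hn : 2 ≤ n) (hEven : Even n) (x : ℕ → ℝ)
    (hmono : ∀ i j, i ≤ j → j < n → x i ≤ x j)
    (hne : ∃ i < n, ∃ j < n, x i ≠ x j)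
    (p : ℝ) (hp : 1 ≤ p) :
    ∑ i ∈ Finset.range n, ∑ j ∈ Finset.range n,
        (if i < j then |x i - x j| ^ p else 0)
      ≤ ((n : ℝ) ^ 2 / 4) * (x (n - 1) - x 0) ^ p := by
  obtain ⟨m, hm⟩ := hEven
  have hm2 : n = 2 * m := by omega
  have hm1 : 1 ≤ m := by omega
  set R : ℝ := x (n - 1) - x 0 with hRdef
  have hx0 : ∀ i < n, x 0 ≤ x i := fun i hi => hmono 0 i (Nat.zero_le _) hi
  have hxn : ∀ i < n, x i ≤ x (n - 1) := fun i hi => hmono i (n-1) (by omega) (by omega)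
  have hR : 0 < R := by
    obtain ⟨i, hi, j, hj, hij⟩ := hne
    rcases hij.lt_or_gt with h | h
    · have := hx0 i hi; have := hxn j hj; simp only [hRdef]; linarith
    · have := hx0 j hj; have := hxn i hi; simp only [hRdef]; linarith
  have hRp : 0 ≤ R ^ (p - 1) := Real.rpow_nonneg hR.le _
  -- step 1: pointwise bound
  have step1 : ∑ i ∈ Finset.range n, ∑ j ∈ Finset.range n,
        (if i < j then |x i - x j| ^ p else 0)
      ≤ ∑ i ∈ Finset.range n, ∑ j ∈ Finset.range n,
        (if i < j then x j - x i else 0) * R ^ (p - 1) := by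
    apply Finset.sum_le_sum
    intro i hi
    apply Finset.sum_le_sum
    intro j hj
    by_cases hij : i < j
    · rw [if_pos hij, if_pos hij]
      have hd : 0 ≤ x j - x i := by
        have := hmono i j hij.le (Finset.mem_range.mp hj); linarith
      have habs : |x i - x j| = x j - x i := by
        rw [abs_sub_comm, abs_of_nonneg hd]
      rw [habs]
      have hdR : x j - x i ≤ R := by
        have := hx0 i (Finset.mem_range.mp hi)
        have := hxn j (Finset.mem_range.mp hj)
        simp only [hRdef]; linarith
      rcases eq_or_lt_of_le hd with h0 | h0
      · rw [← h0, Real.zero_rpow (by linarith : p ≠ 0), zero_mul]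
      · have : (x j - x i) ^ p = (x j - x i) * (x j - x i) ^ (p - 1) := by
          rw [← Real.rpow_one_add' (by linarith) (by linarith)]
          ring_nf
        rw [this]
        exact mul_le_mul_of_nonneg_left
          (Real.rpow_le_rpow h0.le hdR (by linarith)) hd
    · rw [if_neg hij, if_neg hij, zero_mul]
  -- step 2: factor out R^(p-1) and bound the linear sum
  have key : ∑ i ∈ Finset.range n, ∑ j ∈ Finset.range n,
        (if i < j then x j - x i else 0) ≤ (m : ℝ) ^ 2 * R := by
    rw [pairsum_eq]
    have hb : ∑ k ∈ range n, ((2 * k + 1 : ℝ) - n) * x k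
        ≤ ∑ k ∈ range n, ((2 * k + 1 : ℝ) - n) *
            (if n ≤ 2 * k + 1 then x (n - 1) else x 0) := by
      apply Finset.sum_le_sum
      intro k hk
      have hk' := Finset.mem_range.mp hk
      by_cases hc : n ≤ 2 * k + 1
      · rw [if_pos hc]
        have hcoef : (0 : ℝ) ≤ (2 * k + 1 : ℝ) - n := by
          have : (n : ℝ) ≤ 2 * k + 1 := by exact_mod_cast hc
          linarith
        exact mul_le_mul_of_nonneg_left (hxn k hk') hcoef
      · rw [if_neg hc]
        have hcoef : (2 * k + 1 : ℝ) - n ≤ 0 := by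
          have : (2 * k + 1 : ℝ) ≤ n := by exact_mod_cast (by omega : 2 * k + 1 ≤ n)
          linarith
        exact mul_le_mul_of_nonpos_left (hx0 k hk') hcoef
    refine hb.trans (le_of_eq ?_)
    subst hm2
    rw [Finset.range_eq_Ico, ← Finset.sum_Ico_consecutive _ (Nat.zero_le m)
      (by omega : m ≤ 2 * m)]
    have e1 : ∑ k ∈ Finset.Ico 0 m, ((2 * k + 1 : ℝ) - (2 * m : ℕ)) *
        (if 2 * m ≤ 2 * k + 1 then x (2 * m - 1) else x 0)
        = - (m : ℝ) ^ 2 * x 0 := by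
      rw [← Finset.range_eq_Ico]
      have : ∀ k ∈ range m, ((2 * k + 1 : ℝ) - (2 * m : ℕ)) *
          (if 2 * m ≤ 2 * k + 1 then x (2 * m - 1) else x 0)
          = ((2 * k + 1 : ℝ) - 2 * m) * x 0 := by
        intro k hk
        have hk' := Finset.mem_range.mp hk
        rw [if_neg (by omega)]
        push_cast; ring
      rw [Finset.sum_congr rfl this, ← Finset.sum_mul]
      have : ∑ k ∈ range m, ((2 * k + 1 : ℝ) - 2 * m)
          = (∑ k ∈ range m, (2 * (k : ℝ) + 1)) - m * (2 * m) := by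
        rw [Finset.sum_sub_distrib, Finset.sum_const, Finset.card_range, nsmul_eq_mul]
      rw [this, oddsum]
      ring
    have e2 : ∑ k ∈ Finset.Ico m (2 * m), ((2 * k + 1 : ℝ) - (2 * m : ℕ)) *
        (if 2 * m ≤ 2 * k + 1 then x (2 * m - 1) else x 0)
        = (m : ℝ) ^ 2 * x (2 * m - 1) := by
      rw [Finset.sum_Ico_eq_sum_range]
      have h2m : 2 * m - m = m := by omega
      rw [h2m]
      have : ∀ k ∈ range m, (2 * ((m + k : ℕ) : ℝ) + 1 - ((2 * m : ℕ) : ℝ)) *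
          (if 2 * m ≤ 2 * (m + k) + 1 then x (2 * m - 1) else x 0)
          = (2 * (k : ℝ) + 1) * x (2 * m - 1) := by
        intro k hk
        rw [if_pos (by omega)]
        push_cast; ring
      rw [Finset.sum_congr rfl this, ← Finset.sum_mul, oddsum]
    rw [e1, e2]
    simp only [hRdef]
    ring
  calc ∑ i ∈ Finset.range n, ∑ j ∈ Finset.range n,
        (if i < j then |x i - x j| ^ p else 0)
      ≤ ∑ i ∈ Finset.range n, ∑ j ∈ Finset.range n,
        (if i < j then x j - x i else 0) * R ^ (p - 1) := step1
    _ = (∑ i ∈ Finset.range n, ∑ j ∈ Finset.range n,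
        (if i < j then x j - x i else 0)) * R ^ (p - 1) := by
        simp_rw [← Finset.sum_mul]
    _ ≤ ((m : ℝ) ^ 2 * R) * R ^ (p - 1) :=
        mul_le_mul_of_nonneg_right key hRp
    _ = ((n : ℝ) ^ 2 / 4) * R ^ p := by
        have : R ^ p = R * R ^ (p - 1) := by
          rw [← Real.rpow_one_add' (by linarith) (by linarith)]
          ring_nf
        rw [this, hm2]
        push_cast
        ring
end

section
/- Let n ≥ 2 be an odd positive integer and let x_1 ≤ x_2 ≤ ... ≤ x_n be real numbers that are not all equal. Then for every real number p ≥ 1, the sum over all pairs 1 ≤ i < j ≤ n of |x_i - x_j|^p is at most ((n² - 1)/4)·(x_n - x_1)^p. -/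
open Finset

lemma gauss_real (n : ℕ) : ∑ k ∈ Finset.range n, (k : ℝ) = n * (n - 1) / 2 := by
  induction n with
  | zero => simp
  | succ n ih =>
    rw [Finset.sum_range_succ, ih]
    push_cast
    ring

lemma sumT (x : ℕ → ℝ) (n : ℕ) :
    ∑ i ∈ Finset.range n, ∑ j ∈ Finset.range n, (if i < j then x j - x i else 0)
      = ∑ k ∈ Finset.range n, ((2 * k : ℝ) - (n - 1)) * x k := by
  induction n with
  | zero => simp
  | succ n ih =>
    have hinner : ∀ i, ∑ j ∈ Finset.range (n+1), (if i < j then x j - x i else 0)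
        = (∑ j ∈ Finset.range n, (if i < j then x j - x i else 0))
          + (if i < n then x n - x i else 0) := fun i => Finset.sum_range_succ _ n
    simp only [hinner]
    rw [Finset.sum_add_distrib, Finset.sum_range_succ, ih]
    have h1 : ∑ j ∈ Finset.range n, (if n < j then x j - x n else 0) = 0 := by
      apply Finset.sum_eq_zero
      intro j hj
      rw [if_neg (by simpa using Nat.not_lt.mpr (le_of_lt (Finset.mem_range.mp hj)))]
    have h2 : ∑ i ∈ Finset.range (n+1), (if i < n then x n - x i else 0)
        = ∑ i ∈ Finset.range n, (x n - x i) := by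
      rw [Finset.sum_range_succ, if_neg (lt_irrefl n), add_zero]
      exact Finset.sum_congr rfl fun i hi => if_pos (Finset.mem_range.mp hi)
    rw [h1, h2, add_zero, Finset.sum_sub_distrib, Finset.sum_const, Finset.sum_range_succ]
    have h3 : ∀ k : ℕ, ((2 * (k:ℝ)) - ((n:ℝ) + 1 - 1)) * x k
        = ((2 * (k:ℝ)) - ((n:ℝ) - 1)) * x k - x k := by intro k; ring
    push_cast
    simp only [h3]
    rw [Finset.sum_sub_distrib, Finset.card_range, nsmul_eq_mul]
    push_cast
    ring

lemma keybound (m : ℕ) (x : ℕ → ℝ) (hmono : ∀ i j, i ≤ j → j < 2*m+1 → x i ≤ x j) :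
    ∑ k ∈ Finset.range (2*m+1), ((2 * k : ℝ) - (2*m)) * x k
      ≤ ((m : ℝ) * (m+1)) * (x (2*m) - x 0) := by
  have step1 : ∑ k ∈ Finset.range (2*m+1), ((2 * k : ℝ) - (2*m)) * x k
      ≤ ∑ k ∈ Finset.range (2*m+1),
          ((2 * k : ℝ) - (2*m)) * (if k ≤ m then x 0 else x (2*m)) := by
    apply Finset.sum_le_sum
    intro k hk
    have hk' : k < 2*m+1 := Finset.mem_range.mp hk
    by_cases h : k ≤ m
    · rw [if_pos h]
      have hc : ((2 * k : ℝ) - (2*m)) ≤ 0 := by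
        have : (k:ℝ) ≤ m := by exact_mod_cast h
        linarith
      have hx : x 0 ≤ x k := hmono 0 k (Nat.zero_le k) hk'
      nlinarith
    · rw [if_neg h]
      have hc : (0:ℝ) ≤ ((2 * k : ℝ) - (2*m)) := by
        have : (m:ℝ) < k := by exact_mod_cast Nat.not_le.mp h
        linarith
      have hx : x k ≤ x (2*m) := hmono k (2*m) (by omega) (by omega)
      nlinarith
  refine step1.trans (le_of_eq ?_)
  rw [Finset.range_eq_Ico, ← Finset.sum_Ico_consecutive _ (Nat.zero_le (m+1)) (by omega : m+1 ≤ 2*m+1)]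
  have e1 : ∑ k ∈ Finset.Ico 0 (m+1),
      ((2 * k : ℝ) - (2*m)) * (if k ≤ m then x 0 else x (2*m))
      = (∑ k ∈ Finset.range (m+1), ((2 * k : ℝ) - (2*m))) * x 0 := by
    rw [← Finset.range_eq_Ico, Finset.sum_mul]
    refine Finset.sum_congr rfl fun k hk => ?_
    have := Finset.mem_range.mp hk
    rw [if_pos (by omega)]
  have e2 : ∑ k ∈ Finset.Ico (m+1) (2*m+1),
      ((2 * k : ℝ) - (2*m)) * (if k ≤ m then x 0 else x (2*m))
      = (∑ j ∈ Finset.range m, ((2 * (j:ℝ)) + 2)) * x (2*m) := by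
    rw [Finset.sum_Ico_eq_sum_range, Finset.sum_mul]
    have hm : 2*m+1 - (m+1) = m := by omega
    rw [hm]
    refine Finset.sum_congr rfl fun j hj => ?_
    rw [if_neg (by omega)]
    push_cast
    ring
  rw [e1, e2]
  have g1 : (∑ k ∈ Finset.range (m+1), ((2 * k : ℝ) - (2*m))) = -(m * (m+1)) := by
    rw [Finset.sum_sub_distrib, ← Finset.mul_sum, gauss_real, Finset.sum_const,
      Finset.card_range, nsmul_eq_mul]
    push_cast
    ring
  have g2 : (∑ j ∈ Finset.range m, ((2 * (j:ℝ)) + 2)) = m * (m+1) := by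
    rw [Finset.sum_add_distrib, ← Finset.mul_sum, gauss_real, Finset.sum_const,
      Finset.card_range, nsmul_eq_mul]
    rcases Nat.eq_zero_or_pos m with h | h
    · subst h; simp
    · have : (1:ℝ) ≤ m := by exact_mod_cast h
      push_cast
      field_simp
      ring
  rw [g1, g2]
  ring

/-- For `n ≥ 2` odd and `x_1 ≤ ⋯ ≤ x_n` real numbers not all equal,
for every real `p ≥ 1`, `∑_{i<j} |x i - x j|^p ≤ ((n²-1)/4) (x (n-1) - x 0)^p`. -/
theorem range_type_upper_bound_odd
    (n : ℕ) (hn : 2 ≤ n) (hOdd : Odd n) (x : ℕ → ℝ)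
    (hmono : ∀ i j, i ≤ j → j < n → x i ≤ x j)
    (hne : ∃ i < n, ∃ j < n, x i ≠ x j)
    (p : ℝ) (hp : 1 ≤ p) :
    ∑ i ∈ Finset.range n, ∑ j ∈ Finset.range n,
        (if i < j then |x i - x j| ^ p else 0)
      ≤ (((n : ℝ) ^ 2 - 1) / 4) * (x (n - 1) - x 0) ^ p := by
  obtain ⟨m, hm⟩ := hOdd
  subst hm
  have h21 : 2*m+1-1 = 2*m := by omega
  rw [h21]
  -- R > 0
  have hR : 0 < x (2*m) - x 0 := by
    obtain ⟨i, hi, j, hj, hij⟩ := hne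
    have h1 : x 0 ≤ x (2*m) := hmono 0 (2*m) (by omega) (by omega)
    rcases h1.lt_or_eq with h | h
    · linarith
    · exfalso
      apply hij
      have hi0 : x 0 ≤ x i := hmono 0 i (by omega) hi
      have hi1 : x i ≤ x (2*m) := hmono i (2*m) (by omega) (by omega)
      have hj0 : x 0 ≤ x j := hmono 0 j (by omega) hj
      have hj1 : x j ≤ x (2*m) := hmono j (2*m) (by omega) (by omega)
      linarith
  set R : ℝ := x (2*m) - x 0 with hRdef
  have hRnn : (0:ℝ) ≤ R := hR.le
  -- pointwise bound
  have hpt : ∀ i j, i < j → j < 2*m+1 → |x i - x j| ^ p ≤ R ^ (p-1) * (x j - x i) := by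
    intro i j hij hjn
    have ha : 0 ≤ x j - x i := by
      have := hmono i j hij.le hjn
      linarith
    have haR : x j - x i ≤ R := by
      have h1 : x 0 ≤ x i := hmono 0 i (by omega) (by omega)
      have h2 : x j ≤ x (2*m) := hmono j (2*m) (by omega) (by omega)
      simp only [hRdef]
      linarith
    rw [abs_sub_comm, abs_of_nonneg ha]
    rcases ha.lt_or_eq with h | h
    · have heq : (x j - x i) ^ p = (x j - x i) ^ (p-1) * (x j - x i) := by
        rw [← Real.rpow_add_one (ne_of_gt h) (p-1)]
        norm_num
      rw [heq]
      exact mul_le_mul_of_nonneg_right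
        (Real.rpow_le_rpow ha haR (by linarith)) ha
    · rw [← h, Real.zero_rpow (by linarith : p ≠ 0)]; simp
  -- sum bound
  have hsum : ∑ i ∈ Finset.range (2*m+1), ∑ j ∈ Finset.range (2*m+1),
        (if i < j then |x i - x j| ^ p else 0)
      ≤ R ^ (p-1) * ∑ i ∈ Finset.range (2*m+1), ∑ j ∈ Finset.range (2*m+1),
        (if i < j then x j - x i else 0) := by
    rw [Finset.mul_sum]
    apply Finset.sum_le_sum
    intro i hi
    rw [Finset.mul_sum]
    apply Finset.sum_le_sum
    intro j hj
    split_ifs with h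
    · exact hpt i j h (Finset.mem_range.mp hj)
    · simp
  have hT : ∑ i ∈ Finset.range (2*m+1), ∑ j ∈ Finset.range (2*m+1),
        (if i < j then x j - x i else 0) ≤ ((m : ℝ) * (m+1)) * R := by
    rw [sumT]
    have hc : ∀ k : ℕ, ((2 * (k:ℝ)) - (((2*m+1 : ℕ):ℝ) - 1)) * x k
        = ((2 * (k:ℝ)) - (2*(m:ℝ))) * x k := by
      intro k; push_cast; ring
    simp only [hc]
    exact keybound m x hmono
  have hfin : R ^ (p-1) * (((m : ℝ) * (m+1)) * R)
      = ((((2*m+1 : ℕ):ℝ) ^ 2 - 1) / 4) * R ^ p := by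
    have hRp : R ^ (p-1) * R = R ^ p := by
      rw [← Real.rpow_add_one (ne_of_gt hR) (p-1)]
      norm_num
    have : ((((2*m+1 : ℕ):ℝ) ^ 2 - 1) / 4) = (m : ℝ) * (m+1) := by
      push_cast; ring
    rw [this, ← hRp]
    ring
  calc ∑ i ∈ Finset.range (2*m+1), ∑ j ∈ Finset.range (2*m+1),
        (if i < j then |x i - x j| ^ p else 0)
      ≤ R ^ (p-1) * ∑ i ∈ Finset.range (2*m+1), ∑ j ∈ Finset.range (2*m+1),
        (if i < j then x j - x i else 0) := hsum
    _ ≤ R ^ (p-1) * (((m : ℝ) * (m+1)) * R) :=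
        mul_le_mul_of_nonneg_left hT (Real.rpow_nonneg hRnn _)
    _ = ((((2*m+1 : ℕ):ℝ) ^ 2 - 1) / 4) * R ^ p := hfin
end

section
/- Let n ≥ 2 be a positive integer and let x_1 ≤ x_2 ≤ ... ≤ x_n be real numbers that are not all equal. Then for every real number p ≥ 1, the sum over all pairs 1 ≤ i < j ≤ n of |x_i - x_j|^p is at least ((n-2)/2^{p-1} + 1)·(x_n - x_1)^p. -/
open Finset

private lemma key_pow_ineq (a b : ℝ) (ha : 0 ≤ a) (hb : 0 ≤ b) {p : ℝ} (hp : 1 ≤ p) :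
    (a + b) ^ p / 2 ^ (p - 1) ≤ a ^ p + b ^ p := by
  have h := NNReal.rpow_add_le_mul_rpow_add_rpow ⟨a, ha⟩ ⟨b, hb⟩ hp
  have h' : (a + b) ^ p ≤ 2 ^ (p - 1) * (a ^ p + b ^ p) := by
    exact_mod_cast h
  rw [div_le_iff₀ (by positivity)]
  linarith

/-- For `n ≥ 2` and `x_1 ≤ ⋯ ≤ x_n` real numbers not all equal,
for every real `p ≥ 1`,
`((n-2)/2^(p-1) + 1) (x (n-1) - x 0)^p ≤ ∑_{i<j} |x i - x j|^p`. -/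
theorem range_type_lower_bound
    (n : ℕ) (hn : 2 ≤ n) (x : ℕ → ℝ)
    (hmono : ∀ i j, i ≤ j → j < n → x i ≤ x j)
    (hne : ∃ i < n, ∃ j < n, x i ≠ x j)
    (p : ℝ) (hp : 1 ≤ p) :
    (((n : ℝ) - 2) / 2 ^ (p - 1) + 1) * (x (n - 1) - x 0) ^ p
      ≤ ∑ i ∈ Finset.range n, ∑ j ∈ Finset.range n,
          (if i < j then |x i - x j| ^ p else 0) := by
  set f : ℕ → ℕ → ℝ := fun i j => if i < j then |x i - x j| ^ p else 0 with hf
  have hfnonneg : ∀ i j, 0 ≤ f i j := by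
    intro i j
    simp only [hf]
    split
    · positivity
    · exact le_rfl
  show (((n : ℝ) - 2) / 2 ^ (p - 1) + 1) * (x (n - 1) - x 0) ^ p
      ≤ ∑ i ∈ Finset.range n, ∑ j ∈ Finset.range n, f i j
  set R : ℝ := x (n - 1) - x 0 with hR
  have hn1 : n - 1 < n := Nat.sub_lt (by omega) one_pos
  have hRnn : 0 ≤ R := by
    have := hmono 0 (n - 1) (Nat.zero_le _) hn1
    linarith
  -- abbreviations
  have habs : ∀ i j, i ≤ j → j < n → |x i - x j| = x j - x i := by
    intro i j hij hjn
    rw [abs_sub_comm, abs_of_nonneg (by linarith [hmono i j hij hjn])]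
  -- Step 1: lower bound the double sum
  have step1 : f 0 (n - 1) + ∑ j ∈ Ico 1 (n - 1), (f 0 j + f j (n - 1))
      ≤ ∑ i ∈ range n, ∑ j ∈ range n, f i j := by
    have hsub : Ico 1 (n - 1) ∪ {n - 1} ⊆ range n := by
      intro j hj
      simp only [mem_union, mem_Ico, mem_singleton] at hj
      rcases hj with ⟨_, h⟩ | rfl
      · exact mem_range.mpr (by omega)
      · exact mem_range.mpr hn1
    have hdisj : Disjoint (Ico 1 (n - 1)) ({n - 1} : Finset ℕ) := by
      simp [Finset.disjoint_singleton_right]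
    have hA : f 0 (n - 1) + ∑ j ∈ Ico 1 (n - 1), f 0 j ≤ ∑ j ∈ range n, f 0 j := by
      calc f 0 (n - 1) + ∑ j ∈ Ico 1 (n - 1), f 0 j
          = ∑ j ∈ Ico 1 (n - 1) ∪ {n - 1}, f 0 j := by
            rw [sum_union hdisj, sum_singleton]; ring
        _ ≤ ∑ j ∈ range n, f 0 j :=
            sum_le_sum_of_subset_of_nonneg hsub (fun j _ _ => hfnonneg 0 j)
    have hB : ∑ j ∈ Ico 1 (n - 1), f j (n - 1) ≤ ∑ i ∈ Ico 1 n, f i (n - 1) :=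
      sum_le_sum_of_subset_of_nonneg (Ico_subset_Ico le_rfl (by omega))
        (fun j _ _ => hfnonneg j (n - 1))
    have hC : ∑ i ∈ Ico 1 n, f i (n - 1) ≤ ∑ i ∈ Ico 1 n, ∑ j ∈ range n, f i j :=
      sum_le_sum (fun i _ => single_le_sum (fun j _ => hfnonneg i j) (mem_range.mpr hn1))
    have hD : ∑ i ∈ range n, ∑ j ∈ range n, f i j
        = ∑ j ∈ range n, f 0 j + ∑ i ∈ Ico 1 n, ∑ j ∈ range n, f i j := by
      rw [range_eq_Ico, Finset.sum_eq_sum_Ico_succ_bot (show 0 < n by omega)]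
    rw [sum_add_distrib, hD]
    linarith
  -- Step 2: lower bound each interior pair
  have step2 : ∀ j ∈ Ico 1 (n - 1), R ^ p / 2 ^ (p - 1) ≤ f 0 j + f j (n - 1) := by
    intro j hj
    simp only [mem_Ico] at hj
    have hj1 : (0:ℕ) < j := hj.1
    have hjn1 : j < n - 1 := hj.2
    have hjn : j < n := by omega
    have e1 : f 0 j = (x j - x 0) ^ p := by
      simp only [hf, if_pos hj1, habs 0 j (Nat.zero_le _) hjn]
    have e2 : f j (n - 1) = (x (n - 1) - x j) ^ p := by
      simp only [hf, if_pos hjn1, habs j (n - 1) (by omega) hn1]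
    rw [e1, e2]
    have ha : 0 ≤ x j - x 0 := by linarith [hmono 0 j (Nat.zero_le _) hjn]
    have hb : 0 ≤ x (n - 1) - x j := by linarith [hmono j (n - 1) (by omega) hn1]
    have := key_pow_ineq (x j - x 0) (x (n - 1) - x j) ha hb hp
    have hsum : (x j - x 0) + (x (n - 1) - x j) = R := by rw [hR]; ring
    rwa [hsum] at this
  have hcard : (Ico 1 (n - 1)).card = n - 2 := by
    rw [Nat.card_Ico]; omega
  have step3 : ((n : ℝ) - 2) * (R ^ p / 2 ^ (p - 1))
      ≤ ∑ j ∈ Ico 1 (n - 1), (f 0 j + f j (n - 1)) := by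
    have := Finset.card_nsmul_le_sum (Ico 1 (n - 1))
      (fun j => f 0 j + f j (n - 1)) (R ^ p / 2 ^ (p - 1)) step2
    rw [hcard, nsmul_eq_mul] at this
    have hcast : ((n - 2 : ℕ) : ℝ) = (n : ℝ) - 2 := by
      push_cast [Nat.cast_sub hn]; ring
    rwa [hcast] at this
  have e0 : f 0 (n - 1) = R ^ p := by
    simp only [hf, if_pos (by omega : 0 < n - 1), habs 0 (n - 1) (Nat.zero_le _) hn1, hR]
  calc (((n : ℝ) - 2) / 2 ^ (p - 1) + 1) * R ^ p
      = R ^ p + ((n : ℝ) - 2) * (R ^ p / 2 ^ (p - 1)) := by ring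
    _ ≤ f 0 (n - 1) + ∑ j ∈ Ico 1 (n - 1), (f 0 j + f j (n - 1)) := by
        rw [e0]; gcongr
    _ ≤ ∑ i ∈ range n, ∑ j ∈ range n, f i j := step1
end

section
/- Let n ≥ 2 and let x_1 ≤ x_2 ≤ ... ≤ x_n be real numbers that are not all equal. Then n/2 ≤ Σ_{1 ≤ i < j ≤ n} |x_i - x_j|² / (x_n - x_1)² ≤ n²/4 if n is even, and n/2 ≤ Σ_{1 ≤ i < j ≤ n} |x_i - x_j|² / (x_n - x_1)² ≤ (n² - 1)/4 if n is odd. -/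
def Tabs (n : ℕ) : ℤ := ∑ i ∈ Finset.range n, |2 * (i:ℤ) + 1 - n|

lemma Tabs_step (n : ℕ) : Tabs (n+2) = Tabs n + 2*(n+1) := by
  unfold Tabs
  rw [Finset.sum_range_succ, Finset.sum_range_succ']
  rw [Finset.sum_congr rfl (fun i hi => by push_cast; rw [show 2*((i:ℤ)+1)+1-((n:ℤ)+2) = 2*(i:ℤ)+1-(n:ℤ) by ring])]
  push_cast
  have e1 : |(1:ℤ) - ((n:ℤ) + 2)| = n + 1 := by
    rw [show (1:ℤ)-((n:ℤ)+2) = -((n:ℤ)+1) by ring, abs_neg, abs_of_nonneg (by positivity)]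
  have e2 : |2 * ((n:ℤ)+1) + 1 - ((n:ℤ) + 2)| = n + 1 := by
    rw [show 2*((n:ℤ)+1)+1-((n:ℤ)+2) = (n:ℤ)+1 by ring, abs_of_nonneg (by positivity)]
  rw [e1, e2]; ring

lemma Tabs_even (m : ℕ) : Tabs (2*m) = 2*m^2 := by
  induction m with
  | zero => simp [Tabs]
  | succ k ih =>
    rw [show 2*(k+1) = 2*k+2 by ring, Tabs_step, ih]
    push_cast; ring

lemma Tabs_odd (m : ℕ) : Tabs (2*m+1) = 2*m*(m+1) := by
  induction m with
  | zero => simp [Tabs]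
  | succ k ih =>
    rw [show 2*(k+1)+1 = (2*k+1)+2 by ring, Tabs_step, ih]
    push_cast; ring

/-- For `n ≥ 2` and `x_1 ≤ ⋯ ≤ x_n` not all equal,
`n/2 ≤ ∑_{i<j} |x i - x j|² / (x (n-1) - x 0)²`, and the ratio is at most `n²/4`
if `n` is even and at most `(n²-1)/4` if `n` is odd. -/
theorem range_type_bounds_p_two
    (n : ℕ) (hn : 2 ≤ n) (x : ℕ → ℝ)
    (hmono : ∀ i j, i ≤ j → j < n → x i ≤ x j)
    (hne : ∃ i < n, ∃ j < n, x i ≠ x j) :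
    (n : ℝ) / 2 ≤ (∑ i ∈ Finset.range n, ∑ j ∈ Finset.range n,
        (if i < j then |x i - x j| ^ 2 else 0)) / (x (n - 1) - x 0) ^ 2 ∧
    (Even n →
      (∑ i ∈ Finset.range n, ∑ j ∈ Finset.range n,
          (if i < j then |x i - x j| ^ 2 else 0)) / (x (n - 1) - x 0) ^ 2
        ≤ (n : ℝ) ^ 2 / 4) ∧
    (Odd n →
      (∑ i ∈ Finset.range n, ∑ j ∈ Finset.range n,
          (if i < j then |x i - x j| ^ 2 else 0)) / (x (n - 1) - x 0) ^ 2
        ≤ ((n : ℝ) ^ 2 - 1) / 4) := by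
  obtain ⟨m, rfl⟩ : ∃ m, n = m + 2 := ⟨n - 2, by omega⟩
  have habs : ∀ i j : ℕ, (if i < j then |x i - x j| ^ 2 else 0)
      = (if i < j then (x j - x i) ^ 2 else 0) := by
    intro i j
    congr 1
    rw [sq_abs]; ring
  simp only [habs, show m + 2 - 1 = m + 1 from rfl]
  set R : ℝ := x (m+1) - x 0 with hRdef
  set S : ℝ := ∑ i ∈ Finset.range (m+2), ∑ j ∈ Finset.range (m+2),
      (if i < j then (x j - x i) ^ 2 else 0) with hSdef
  -- R > 0
  have hle : x 0 ≤ x (m+1) := hmono 0 (m+1) (by omega) (by omega)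
  have hR : 0 < R := by
    rcases lt_or_eq_of_le hle with h | h
    · simpa [hRdef] using sub_pos.mpr h
    · exfalso
      obtain ⟨i, hi, j, hj, hij⟩ := hne
      have h1 := hmono 0 i (by omega) hi
      have h2 := hmono i (m+1) (by omega) (by omega)
      have h3 := hmono 0 j (by omega) hj
      have h4 := hmono j (m+1) (by omega) (by omega)
      have : x i = x j := by linarith
      exact hij this
  have hR2 : (0:ℝ) < R^2 := by positivity
  -- LOWER BOUND: (m+2)/2 * R^2 ≤ S
  have hlow : ((m:ℝ)+2)/2 * R^2 ≤ S := by
    rw [hSdef, Finset.sum_range_succ']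
    have hrow0 : ∑ j ∈ Finset.range (m+2), (if 0 < j then (x j - x 0) ^ 2 else 0)
        = (∑ j ∈ Finset.range m, (x (j+1) - x 0)^2) + R^2 := by
      have : ∀ j ∈ Finset.range (m+2), (if 0 < j then (x j - x 0) ^ 2 else 0)
          = (x j - x 0)^2 := by
        intro j _
        split_ifs with h
        · rfl
        · have : j = 0 := by omega
          simp [this]
      rw [Finset.sum_congr rfl this, Finset.sum_range_succ, Finset.sum_range_succ']
      simp only [hRdef, sub_self]
      ring
    rw [hrow0]
    have hcol : ∑ i ∈ Finset.range (m+1), ∑ j ∈ Finset.range (m+2),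
        (if i+1 < j then (x j - x (i+1)) ^ 2 else 0)
        ≥ ∑ i ∈ Finset.range m, (x (m+1) - x (i+1))^2 := by
      have h1 : ∀ i ∈ Finset.range (m+1), ∑ j ∈ Finset.range (m+2),
          (if i+1 < j then (x j - x (i+1)) ^ 2 else 0)
          ≥ (if i < m then (x (m+1) - x (i+1))^2 else 0) := by
        intro i _
        have := Finset.single_le_sum (f := fun j => if i+1 < j then (x j - x (i+1)) ^ 2 else 0)
          (fun j _ => by split_ifs <;> positivity)
          (Finset.self_mem_range_succ (m+1))
        calc (if i < m then (x (m+1) - x (i+1))^2 else 0)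
            = (if i+1 < m+1 then (x (m+1) - x (i+1)) ^ 2 else 0) := by
              congr 1; simp [Nat.add_lt_add_iff_right]
          _ ≤ _ := this
      calc ∑ i ∈ Finset.range (m+1), ∑ j ∈ Finset.range (m+2),
            (if i+1 < j then (x j - x (i+1)) ^ 2 else 0)
          ≥ ∑ i ∈ Finset.range (m+1), (if i < m then (x (m+1) - x (i+1))^2 else 0) :=
            Finset.sum_le_sum h1
        _ = ∑ i ∈ Finset.range m, (x (m+1) - x (i+1))^2 := by
            rw [Finset.sum_range_succ]
            simp
            exact Finset.sum_congr rfl (fun i hi => by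
              rw [if_pos (Finset.mem_range.mp hi)])
    have hpair : ∀ i ∈ Finset.range m,
        R^2/2 ≤ (x (i+1) - x 0)^2 + (x (m+1) - x (i+1))^2 := by
      intro i _
      have h : (x (i+1) - x 0) + (x (m+1) - x (i+1)) = R := by rw [hRdef]; ring
      nlinarith [sq_nonneg ((x (i+1) - x 0) - (x (m+1) - x (i+1)))]
    have hsum : (m:ℝ) * (R^2/2) ≤ ∑ i ∈ Finset.range m,
        ((x (i+1) - x 0)^2 + (x (m+1) - x (i+1))^2) := by
      calc (m:ℝ) * (R^2/2) = ∑ _i ∈ Finset.range m, R^2/2 := by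
            rw [Finset.sum_const, Finset.card_range, nsmul_eq_mul]
        _ ≤ _ := Finset.sum_le_sum hpair
    rw [Finset.sum_add_distrib] at hsum
    linarith [hcol]
  -- UPPER BOUND
  set c : ℝ := (x 0 + x (m+1))/2 with hcdef
  have hy : ∀ i ∈ Finset.range (m+2), |x i - c| ≤ R/2 := by
    intro i hi
    have hi' := Finset.mem_range.mp hi
    have h1 : x 0 ≤ x i := hmono 0 i (by omega) (by omega)
    have h2 : x i ≤ x (m+1) := hmono i (m+1) (by omega) (by omega)
    rw [abs_le, hcdef, hRdef]
    constructor <;> [linarith; linarith]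
  have hstep1 : S ≤ ∑ i ∈ Finset.range (m+2), ∑ j ∈ Finset.range (m+2),
      (if i < j then R * (x j - x i) else 0) := by
    rw [hSdef]
    refine Finset.sum_le_sum (fun i hi => Finset.sum_le_sum (fun j hj => ?_))
    have hi' := Finset.mem_range.mp hi
    have hj' := Finset.mem_range.mp hj
    split_ifs with h
    · have h0 : 0 ≤ x j - x i :=
        sub_nonneg.mpr (hmono i j (le_of_lt h) (by omega))
      have h1 : x 0 ≤ x i := hmono 0 i (by omega) (by omega)
      have h2 : x j ≤ x (m+1) := hmono j (m+1) (by omega) (by omega)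
      have h3 : x j - x i ≤ R := by rw [hRdef]; linarith
      nlinarith
    · exact le_rfl
  have hA : ∑ i ∈ Finset.range (m+2), ∑ j ∈ Finset.range (m+2),
      (if i < j then x j - c else 0)
      = ∑ j ∈ Finset.range (m+2), (j:ℝ) * (x j - c) := by
    rw [Finset.sum_comm]
    refine Finset.sum_congr rfl (fun j hj => ?_)
    have hfil : (Finset.range (m+2)).filter (· < j) = Finset.range j := by
      have hj' := Finset.mem_range.mp hj
      ext k
      simp only [Finset.mem_filter, Finset.mem_range]
      omega
    rw [← Finset.sum_filter, hfil, Finset.sum_const, Finset.card_range, nsmul_eq_mul]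
  have hB : ∑ i ∈ Finset.range (m+2), ∑ j ∈ Finset.range (m+2),
      (if i < j then x i - c else 0)
      = ∑ i ∈ Finset.range (m+2), ((m:ℝ)+1-i) * (x i - c) := by
    refine Finset.sum_congr rfl (fun i hi => ?_)
    have hi' := Finset.mem_range.mp hi
    have hfil : (Finset.range (m+2)).filter (fun j => i < j) = Finset.Ico (i+1) (m+2) := by
      ext k
      simp only [Finset.mem_filter, Finset.mem_range, Finset.mem_Ico]
      omega
    rw [← Finset.sum_filter, hfil, Finset.sum_const, Nat.card_Ico, nsmul_eq_mul]
    have : ((m+2 - (i+1) : ℕ):ℝ) = (m:ℝ)+1-i := by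
      rw [show m+2-(i+1) = m+1-i from by omega, Nat.cast_sub (by omega)]
      push_cast; ring
    rw [this]
  have hstep2 : ∑ i ∈ Finset.range (m+2), ∑ j ∈ Finset.range (m+2),
      (if i < j then R * (x j - x i) else 0)
      = R * ∑ i ∈ Finset.range (m+2), (2*(i:ℝ)+1-((m:ℝ)+2)) * (x i - c) := by
    have hterm : ∀ i j : ℕ, (if i < j then R * (x j - x i) else 0)
        = R * ((if i < j then x j - c else 0) - (if i < j then x i - c else 0)) := by
      intro i j
      split_ifs with h <;> ring
    calc ∑ i ∈ Finset.range (m+2), ∑ j ∈ Finset.range (m+2),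
          (if i < j then R * (x j - x i) else 0)
        = ∑ i ∈ Finset.range (m+2), ∑ j ∈ Finset.range (m+2),
          R * ((if i < j then x j - c else 0) - (if i < j then x i - c else 0)) := by
          exact Finset.sum_congr rfl (fun i _ =>
            Finset.sum_congr rfl (fun j _ => hterm i j))
      _ = R * ((∑ i ∈ Finset.range (m+2), ∑ j ∈ Finset.range (m+2),
            (if i < j then x j - c else 0))
          - ∑ i ∈ Finset.range (m+2), ∑ j ∈ Finset.range (m+2),
            (if i < j then x i - c else 0)) := by
          rw [← Finset.sum_sub_distrib]
          rw [Finset.mul_sum]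
          refine Finset.sum_congr rfl (fun i _ => ?_)
          rw [← Finset.sum_sub_distrib, Finset.mul_sum]
      _ = R * ∑ i ∈ Finset.range (m+2), (2*(i:ℝ)+1-((m:ℝ)+2)) * (x i - c) := by
          rw [hA, hB, ← Finset.sum_sub_distrib]
          congr 1
          refine Finset.sum_congr rfl (fun i _ => ?_)
          ring
  have hstep3 : ∑ i ∈ Finset.range (m+2), (2*(i:ℝ)+1-((m:ℝ)+2)) * (x i - c)
      ≤ ((Tabs (m+2) : ℤ) : ℝ) * (R/2) := by
    have hTcast : ((Tabs (m+2) : ℤ) : ℝ)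
        = ∑ i ∈ Finset.range (m+2), |2*(i:ℝ)+1-((m:ℝ)+2)| := by
      unfold Tabs
      push_cast
      rfl
    rw [hTcast, Finset.sum_mul]
    refine Finset.sum_le_sum (fun i hi => ?_)
    calc (2*(i:ℝ)+1-((m:ℝ)+2)) * (x i - c)
        ≤ |(2*(i:ℝ)+1-((m:ℝ)+2)) * (x i - c)| := le_abs_self _
      _ = |2*(i:ℝ)+1-((m:ℝ)+2)| * |x i - c| := abs_mul _ _
      _ ≤ |2*(i:ℝ)+1-((m:ℝ)+2)| * (R/2) :=
          mul_le_mul_of_nonneg_left (hy i hi) (abs_nonneg _)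
  have hup : S ≤ ((Tabs (m+2) : ℤ) : ℝ) * (R/2) * R := by
    calc S ≤ _ := hstep1
      _ = R * ∑ i ∈ Finset.range (m+2), (2*(i:ℝ)+1-((m:ℝ)+2)) * (x i - c) := hstep2
      _ ≤ R * (((Tabs (m+2) : ℤ) : ℝ) * (R/2)) :=
          mul_le_mul_of_nonneg_left hstep3 (le_of_lt hR)
      _ = ((Tabs (m+2) : ℤ) : ℝ) * (R/2) * R := by ring
  clear_value S R c
  refine ⟨?_, ?_, ?_⟩
  · rw [le_div_iff₀ hR2]
    push_cast
    linarith [hlow]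
  · intro heven
    obtain ⟨k, hk⟩ : ∃ k, m + 2 = 2 * k := by
      obtain ⟨k, hk⟩ := heven; exact ⟨k, by omega⟩
    rw [div_le_div_iff₀ hR2 (by norm_num)]
    have hT : ((Tabs (m+2) : ℤ) : ℝ) = 2*(k:ℝ)^2 := by
      rw [hk, Tabs_even]; push_cast; ring
    have hcast : ((m:ℝ)+2) = 2*(k:ℝ) := by
      have : ((m+2 : ℕ) : ℝ) = ((2*k : ℕ) : ℝ) := by rw [hk]
      push_cast at this; linarith
    rw [hT] at hup
    push_cast
    rw [hcast]
    nlinarith [hup]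
  · intro hodd
    obtain ⟨k, hk⟩ : ∃ k, m + 2 = 2 * k + 1 := by
      obtain ⟨k, hk⟩ := hodd; exact ⟨k, by omega⟩
    rw [div_le_div_iff₀ hR2 (by norm_num)]
    have hT : ((Tabs (m+2) : ℤ) : ℝ) = 2*(k:ℝ)*((k:ℝ)+1) := by
      rw [hk, Tabs_odd]; push_cast; ring
    have hcast : ((m:ℝ)+2) = 2*(k:ℝ)+1 := by
      have : ((m+2 : ℕ) : ℝ) = ((2*k+1 : ℕ) : ℝ) := by rw [hk]
      push_cast at this; linarith
    rw [hT] at hup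
    push_cast
    rw [hcast]
    nlinarith [hup]
end

section
/- Let n ≥ 2 be even and let x_1 ≤ ... ≤ x_n and y_1 ≤ ... ≤ y_n be real numbers, each sequence not all equal. Then Σ_{i=1}^n (x_i - x̄)(y_i - ȳ) ≤ (n/4)·(x_n - x_1)(y_n - y_1), where x̄ = (1/n)Σ x_i and ȳ = (1/n)Σ y_i. -/
private lemma sumsq_bound (n : ℕ) (hn : 0 < n) (f : ℕ → ℝ) (a b : ℝ)
    (hab : ∀ i ∈ Finset.range n, a ≤ f i ∧ f i ≤ b) :
    ∑ i ∈ Finset.range n, (f i - (∑ j ∈ Finset.range n, f j) / n) ^ 2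
      ≤ (n : ℝ) / 4 * (b - a) ^ 2 := by
  set S := ∑ j ∈ Finset.range n, f j with hS
  set m : ℝ := S / n with hm
  have hnR : (0 : ℝ) < n := by exact_mod_cast hn
  have h1 : ∑ i ∈ Finset.range n, (f i - m) ^ 2
      = (∑ i ∈ Finset.range n, (f i - a) * (f i - b))
        + ((a + b - 2 * m) * S + (n : ℝ) * (m ^ 2 - a * b)) := by
    have : ∀ i ∈ Finset.range n,
        (f i - m) ^ 2 = (f i - a) * (f i - b) + ((a + b - 2 * m) * f i + (m ^ 2 - a * b)) := by
      intro i _; ring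
    rw [Finset.sum_congr rfl this, Finset.sum_add_distrib, Finset.sum_add_distrib,
      ← Finset.mul_sum, Finset.sum_const, Finset.card_range, nsmul_eq_mul]
  have h2 : ∑ i ∈ Finset.range n, (f i - a) * (f i - b) ≤ 0 := by
    apply Finset.sum_nonpos
    intro i hi
    have := hab i hi
    nlinarith [this.1, this.2]
  have h3 : (a + b - 2 * m) * S + (n : ℝ) * (m ^ 2 - a * b) ≤ (n : ℝ) / 4 * (b - a) ^ 2 := by
    have hmS : m * n = S := by rw [hm, div_mul_cancel₀ S (ne_of_gt hnR)]
    nlinarith [sq_nonneg ((a + b) * n - 2 * S), sq_nonneg ((b - a) * n), hnR]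
  linarith [h1, h2, h3]

/-- For `n ≥ 2` even and nondecreasing sequences `x`, `y` each not all
equal, `∑ (x i - x̄)(y i - ȳ) ≤ (n/4)(x (n-1) - x 0)(y (n-1) - y 0)`. -/
theorem bivariate_upper_bound_even
    (n : ℕ) (hn : 2 ≤ n) (hEven : Even n) (x y : ℕ → ℝ)
    (hxmono : ∀ i j, i ≤ j → j < n → x i ≤ x j)
    (hymono : ∀ i j, i ≤ j → j < n → y i ≤ y j)
    (hxne : ∃ i < n, ∃ j < n, x i ≠ x j)
    (hyne : ∃ i < n, ∃ j < n, y i ≠ y j) :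
    ∑ i ∈ Finset.range n,
        (x i - (∑ j ∈ Finset.range n, x j) / n) *
          (y i - (∑ j ∈ Finset.range n, y j) / n)
      ≤ ((n : ℝ) / 4) * (x (n - 1) - x 0) * (y (n - 1) - y 0) := by
  have hn0 : 0 < n := by omega
  have hnR : (0 : ℝ) < n := by exact_mod_cast hn0
  set f : ℕ → ℝ := fun i => x i - (∑ j ∈ Finset.range n, x j) / n with hf
  set g : ℕ → ℝ := fun i => y i - (∑ j ∈ Finset.range n, y j) / n with hg
  have hxb : ∀ i ∈ Finset.range n, x 0 ≤ x i ∧ x i ≤ x (n - 1) := by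
    intro i hi
    have hi' := Finset.mem_range.mp hi
    exact ⟨hxmono 0 i (Nat.zero_le _) hi', hxmono i (n - 1) (by omega) (by omega)⟩
  have hyb : ∀ i ∈ Finset.range n, y 0 ≤ y i ∧ y i ≤ y (n - 1) := by
    intro i hi
    have hi' := Finset.mem_range.mp hi
    exact ⟨hymono 0 i (Nat.zero_le _) hi', hymono i (n - 1) (by omega) (by omega)⟩
  have hX := sumsq_bound n hn0 x (x 0) (x (n - 1)) hxb
  have hY := sumsq_bound n hn0 y (y 0) (y (n - 1)) hyb
  have hΔx : 0 ≤ x (n - 1) - x 0 := sub_nonneg.mpr (hxmono 0 (n - 1) (by omega) (by omega))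
  have hΔy : 0 ≤ y (n - 1) - y 0 := sub_nonneg.mpr (hymono 0 (n - 1) (by omega) (by omega))
  have hCS : (∑ i ∈ Finset.range n, f i * g i) ^ 2
      ≤ (∑ i ∈ Finset.range n, f i ^ 2) * (∑ i ∈ Finset.range n, g i ^ 2) :=
    Finset.sum_mul_sq_le_sq_mul_sq (Finset.range n) f g
  have hF : 0 ≤ ∑ i ∈ Finset.range n, f i ^ 2 :=
    Finset.sum_nonneg fun i _ => sq_nonneg _
  have hG : 0 ≤ ∑ i ∈ Finset.range n, g i ^ 2 :=
    Finset.sum_nonneg fun i _ => sq_nonneg _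
  have hB : 0 ≤ ((n : ℝ) / 4) * (x (n - 1) - x 0) * (y (n - 1) - y 0) := by positivity
  have hsq : (∑ i ∈ Finset.range n, f i * g i) ^ 2
      ≤ (((n : ℝ) / 4) * (x (n - 1) - x 0) * (y (n - 1) - y 0)) ^ 2 := by
    calc (∑ i ∈ Finset.range n, f i * g i) ^ 2
        ≤ (∑ i ∈ Finset.range n, f i ^ 2) * (∑ i ∈ Finset.range n, g i ^ 2) := hCS
      _ ≤ ((n : ℝ) / 4 * (x (n - 1) - x 0) ^ 2) * ((n : ℝ) / 4 * (y (n - 1) - y 0) ^ 2) :=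
          mul_le_mul hX hY hG (by positivity)
      _ = (((n : ℝ) / 4) * (x (n - 1) - x 0) * (y (n - 1) - y 0)) ^ 2 := by ring
  nlinarith [hsq, hB]
end

section
/- Let n ≥ 2 be odd and let x_1 ≤ ... ≤ x_n and y_1 ≤ ... ≤ y_n be real numbers, each sequence not all equal. Then Σ_{i=1}^n (x_i - x̄)(y_i - ȳ) ≤ ((n² - 1)/(4n))·(x_n - x_1)(y_n - y_1), where x̄ = (1/n)Σ x_i and ȳ = (1/n)Σ y_i. -/
open Finset

private lemma cov_ident (x y : ℕ → ℝ) (N : ℕ) :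
    (N:ℝ) * (∑ i ∈ range N, x i * y i) - (∑ i ∈ range N, x i) * (∑ i ∈ range N, y i)
      = ∑ i ∈ range N, ∑ j ∈ range i, (x i - x j) * (y i - y j) := by
  induction N with
  | zero => simp
  | succ N ih =>
    rw [sum_range_succ, sum_range_succ, sum_range_succ, sum_range_succ, ← ih]
    have h : ∑ j ∈ range N, (x N - x j) * (y N - y j)
        = (N:ℝ) * (x N * y N) - (∑ j ∈ range N, x j) * y N
          - x N * (∑ j ∈ range N, y j) + ∑ j ∈ range N, x j * y j := by
      have : ∀ j ∈ range N, (x N - x j) * (y N - y j)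
          = x N * y N - x j * y N - x N * y j + x j * y j := fun j _ => by ring
      rw [Finset.sum_congr rfl this]
      simp [Finset.sum_add_distrib, Finset.sum_sub_distrib, ← Finset.sum_mul,
        ← Finset.mul_sum, mul_comm]
    rw [h]
    push_cast
    ring

private lemma u_ident (y : ℕ → ℝ) (N : ℕ) :
    ∑ i ∈ range N, ∑ j ∈ range i, (y i - y j)
      = ∑ i ∈ range N, (2*(i:ℝ) - ((N:ℝ)-1)) * y i := by
  induction N with
  | zero => simp
  | succ N ih =>
    rw [sum_range_succ, ih, sum_range_succ]
    have h : ∑ j ∈ range N, (y N - y j) = (N:ℝ) * y N - ∑ j ∈ range N, y j := by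
      rw [Finset.sum_sub_distrib, Finset.sum_const, card_range, nsmul_eq_mul]
    rw [h]
    have h2 : ∑ i ∈ range N, (2*(i:ℝ) - (((N:ℕ)+1:ℝ)-1)) * y i
        = ∑ i ∈ range N, ((2*(i:ℝ) - ((N:ℝ)-1)) * y i - y i) := by
      apply Finset.sum_congr rfl
      intro i _
      push_cast
      ring
    push_cast
    rw [h2, Finset.sum_sub_distrib]
    ring

private lemma coef_bound (y : ℕ → ℝ) (m : ℕ)
    (hy : ∀ i j, i ≤ j → j < 2*m+1 → y i ≤ y j) :
    ∑ i ∈ range (2*m+1), (2*(i:ℝ) - 2*m) * y i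
      ≤ ((m:ℝ)*(m+1)) * (y (2*m) - y 0) := by
  have hzero : ∑ i ∈ range (2*m+1), (2*(i:ℝ) - 2*m) = 0 := by
    have hg : (∑ i ∈ range (2*m+1), i) * 2 = (2*m+1) * (2*m) := by
      simpa using Finset.sum_range_id_mul_two (2*m+1)
    have hg' : (∑ i ∈ range (2*m+1), (i:ℝ)) = (m:ℝ) * (2*m+1) := by
      have : ((∑ i ∈ range (2*m+1), i : ℕ) : ℝ) * 2 = ((2*m+1) * (2*m) : ℕ) := by
        exact_mod_cast congrArg (Nat.cast : ℕ → ℝ) hg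
      push_cast at this ⊢
      linarith
    rw [Finset.sum_sub_distrib, ← Finset.mul_sum, hg', Finset.sum_const, card_range]
    push_cast
    ring
  have hstep : ∑ i ∈ range (2*m+1), (2*(i:ℝ) - 2*m) * y i
      = ∑ i ∈ range (2*m+1), (2*(i:ℝ) - 2*m) * (y i - y 0) := by
    rw [Finset.sum_congr rfl (fun i _ => by ring :
      ∀ i ∈ range (2*m+1), (2*(i:ℝ) - 2*m) * (y i - y 0)
        = (2*(i:ℝ) - 2*m) * y i - (2*(i:ℝ) - 2*m) * y 0)]
    rw [Finset.sum_sub_distrib, ← Finset.sum_mul, hzero]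
    ring
  rw [hstep]
  have hterm : ∀ i ∈ range (2*m+1),
      (2*(i:ℝ) - 2*m) * (y i - y 0)
        ≤ (if m ≤ i then 2*((i:ℝ)-m) else 0) * (y (2*m) - y 0) := by
    intro i hi
    rw [mem_range] at hi
    by_cases h : m ≤ i
    · simp only [if_pos h]
      have h1 : (0:ℝ) ≤ 2*((i:ℝ)-m) := by
        have : (m:ℝ) ≤ i := by exact_mod_cast h
        linarith
      have h2 : y i - y 0 ≤ y (2*m) - y 0 := by
        have := hy i (2*m) (by omega) (by omega)
        linarith
      have h3 : 2*(i:ℝ) - 2*m = 2*((i:ℝ)-m) := by ring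
      rw [h3]
      exact mul_le_mul_of_nonneg_left h2 h1
    · simp only [if_neg h]
      push_neg at h
      have h1 : 2*(i:ℝ) - 2*m ≤ 0 := by
        have : (i:ℝ) ≤ m := by exact_mod_cast h.le
        linarith
      have h2 : 0 ≤ y i - y 0 := by
        have := hy 0 i (Nat.zero_le i) hi
        linarith
      nlinarith
  calc ∑ i ∈ range (2*m+1), (2*(i:ℝ) - 2*m) * (y i - y 0)
      ≤ ∑ i ∈ range (2*m+1), (if m ≤ i then 2*((i:ℝ)-m) else 0) * (y (2*m) - y 0) :=
        Finset.sum_le_sum hterm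
    _ = ((m:ℝ)*(m+1)) * (y (2*m) - y 0) := by
        rw [← Finset.sum_mul]
        congr 1
        rw [range_eq_Ico, ← Finset.sum_Ico_consecutive _ (Nat.zero_le m) (by omega : m ≤ 2*m+1)]
        have e1 : ∑ i ∈ Finset.Ico 0 m, (if m ≤ i then 2*((i:ℝ)-m) else 0) = 0 := by
          apply Finset.sum_eq_zero
          intro i hi
          rw [Finset.mem_Ico] at hi
          rw [if_neg (by omega)]
        have e2 : ∑ i ∈ Finset.Ico m (2*m+1), (if m ≤ i then 2*((i:ℝ)-m) else 0)
            = ∑ i ∈ range (m+1), 2*(i:ℝ) := by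
          rw [Finset.sum_Ico_eq_sum_range]
          have : 2*m+1-m = m+1 := by omega
          rw [this]
          apply Finset.sum_congr rfl
          intro i _
          rw [if_pos (by omega)]
          push_cast
          ring
        rw [e1, e2, zero_add, ← Finset.mul_sum]
        have hg : (∑ i ∈ range (m+1), i) * 2 = (m+1) * m := by
          simpa using Finset.sum_range_id_mul_two (m+1)
        have hg' : (∑ i ∈ range (m+1), (i:ℝ)) * 2 = ((m:ℝ)+1) * m := by
          have h := congrArg (Nat.cast : ℕ → ℝ) hg
          push_cast at h
          linarith
        linarith

/-- For `n ≥ 2` odd and nondecreasing sequences `x`, `y` each not all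
equal, `∑ (x i - x̄)(y i - ȳ) ≤ ((n²-1)/(4n))(x (n-1) - x 0)(y (n-1) - y 0)`. -/
theorem bivariate_upper_bound_odd
    (n : ℕ) (hn : 2 ≤ n) (hOdd : Odd n) (x y : ℕ → ℝ)
    (hxmono : ∀ i j, i ≤ j → j < n → x i ≤ x j)
    (hymono : ∀ i j, i ≤ j → j < n → y i ≤ y j)
    (hxne : ∃ i < n, ∃ j < n, x i ≠ x j)
    (hyne : ∃ i < n, ∃ j < n, y i ≠ y j) :
    ∑ i ∈ Finset.range n,
        (x i - (∑ j ∈ Finset.range n, x j) / n) *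
          (y i - (∑ j ∈ Finset.range n, y j) / n)
      ≤ (((n : ℝ) ^ 2 - 1) / (4 * n)) * (x (n - 1) - x 0) * (y (n - 1) - y 0) := by
  obtain ⟨m, hm⟩ := hOdd
  have hn1 : n - 1 = 2*m := by omega
  have hnpos : (0:ℝ) < n := by positivity
  set X := ∑ j ∈ Finset.range n, x j with hX
  set Y := ∑ j ∈ Finset.range n, y j with hY
  set P := ∑ i ∈ Finset.range n, x i * y i with hP
  have hS : ∑ i ∈ Finset.range n, (x i - X / n) * (y i - Y / n)
      = P - X * Y / n := by
    have expand : ∀ i ∈ range n, (x i - X / n) * (y i - Y / n)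
        = x i * y i - (X/n) * y i - (Y/n) * x i + (X/n)*(Y/n) := fun i _ => by ring
    rw [Finset.sum_congr rfl expand]
    rw [Finset.sum_add_distrib, Finset.sum_sub_distrib, Finset.sum_sub_distrib,
      ← Finset.mul_sum, ← Finset.mul_sum, Finset.sum_const, card_range, nsmul_eq_mul,
      ← hX, ← hY, ← hP]
    field_simp
    ring
  rw [hS]
  have hRx : 0 ≤ x (n-1) - x 0 := by
    have := hxmono 0 (n-1) (Nat.zero_le _) (by omega)
    linarith
  have hRy : 0 ≤ y (n-1) - y 0 := by
    have := hymono 0 (n-1) (Nat.zero_le _) (by omega)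
    linarith
  -- key inequality: n*P - X*Y ≤ ((n^2-1)/4) * Rx * Ry
  have key : (n:ℝ) * P - X * Y ≤ (((n:ℝ)^2 - 1)/4) * (x (n-1) - x 0) * (y (n-1) - y 0) := by
    rw [hP, hX, hY, cov_ident]
    have step1 : ∑ i ∈ range n, ∑ j ∈ range i, (x i - x j) * (y i - y j)
        ≤ ∑ i ∈ range n, ∑ j ∈ range i, (x (n-1) - x 0) * (y i - y j) := by
      apply Finset.sum_le_sum
      intro i hi
      apply Finset.sum_le_sum
      intro j hj
      rw [mem_range] at hi hj
      have hyij : 0 ≤ y i - y j := by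
        have := hymono j i (by omega) hi
        linarith
      have hx1 : x i - x j ≤ x (n-1) - x 0 := by
        have h1 := hxmono i (n-1) (by omega) (by omega)
        have h2 := hxmono 0 j (Nat.zero_le _) (by omega)
        linarith
      exact mul_le_mul_of_nonneg_right hx1 hyij
    have step2 : ∑ i ∈ range n, ∑ j ∈ range i, (x (n-1) - x 0) * (y i - y j)
        = (x (n-1) - x 0) * ∑ i ∈ range n, ∑ j ∈ range i, (y i - y j) := by
      rw [Finset.mul_sum]
      exact Finset.sum_congr rfl fun i _ => by rw [Finset.mul_sum]
    have step3 : ∑ i ∈ range n, ∑ j ∈ range i, (y i - y j)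
        ≤ ((m:ℝ)*(m+1)) * (y (n-1) - y 0) := by
      rw [u_ident]
      have hc : ∀ i ∈ range n, (2*(i:ℝ) - ((n:ℝ)-1)) * y i
          = (2*(i:ℝ) - 2*m) * y i := by
        intro i _
        have : (n:ℝ) = 2*m+1 := by exact_mod_cast congrArg (Nat.cast : ℕ → ℝ) hm
        rw [this]; ring
      rw [Finset.sum_congr rfl hc, hn1, hm]
      exact coef_bound y m (fun i j h1 h2 => hymono i j h1 (by omega))
    have hcast : (n:ℝ) = 2*(m:ℝ)+1 := by exact_mod_cast congrArg (Nat.cast : ℕ → ℝ) hm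
    calc ∑ i ∈ range n, ∑ j ∈ range i, (x i - x j) * (y i - y j)
        ≤ ∑ i ∈ range n, ∑ j ∈ range i, (x (n-1) - x 0) * (y i - y j) := step1
      _ = (x (n-1) - x 0) * ∑ i ∈ range n, ∑ j ∈ range i, (y i - y j) := step2
      _ ≤ (x (n-1) - x 0) * (((m:ℝ)*(m+1)) * (y (n-1) - y 0)) :=
          mul_le_mul_of_nonneg_left step3 hRx
      _ = (((n:ℝ)^2 - 1)/4) * (x (n-1) - x 0) * (y (n-1) - y 0) := by
          rw [hcast]; ring
  have e1 : P - X * Y / n = ((n:ℝ) * P - X * Y) / n := by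
    field_simp
    try ring
  have e2 : (((n : ℝ) ^ 2 - 1) / (4 * n)) * (x (n - 1) - x 0) * (y (n - 1) - y 0)
      = ((((n:ℝ)^2 - 1)/4) * (x (n-1) - x 0) * (y (n-1) - y 0)) / n := by
    field_simp
    try ring
  rw [e1, e2]
  gcongr
end

section
/- Let n ≥ 2 and let x_1 ≤ ... ≤ x_n and y_1 ≤ ... ≤ y_n be real numbers, each sequence not all equal. Then Σ_{i=1}^n (x_i - x̄)(y_i - ȳ) ≥ (1/n)·(x_n - x_1)(y_n - y_1), where x̄ = (1/n)Σ x_i and ȳ = (1/n)Σ y_i. -/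
/-- For `n ≥ 2` and nondecreasing sequences `x`, `y` each not all
equal, `(1/n)(x (n-1) - x 0)(y (n-1) - y 0) ≤ ∑ (x i - x̄)(y i - ȳ)`. -/
theorem bivariate_lower_bound
    (n : ℕ) (hn : 2 ≤ n) (x y : ℕ → ℝ)
    (hxmono : ∀ i j, i ≤ j → j < n → x i ≤ x j)
    (hymono : ∀ i j, i ≤ j → j < n → y i ≤ y j)
    (hxne : ∃ i < n, ∃ j < n, x i ≠ x j)
    (hyne : ∃ i < n, ∃ j < n, y i ≠ y j) :
    (1 / (n : ℝ)) * (x (n - 1) - x 0) * (y (n - 1) - y 0)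
      ≤ ∑ i ∈ Finset.range n,
          (x i - (∑ j ∈ Finset.range n, x j) / n) *
            (y i - (∑ j ∈ Finset.range n, y j) / n) := by
  have hn0 : (0:ℝ) < (n:ℝ) := by positivity
  set Sx := ∑ j ∈ Finset.range n, x j with hSx
  set Sy := ∑ j ∈ Finset.range n, y j with hSy
  set T := ∑ i ∈ Finset.range n, x i * y i with hT
  set S := ∑ i ∈ Finset.range n, (x i - Sx / n) * (y i - Sy / n) with hS
  set D := ∑ p ∈ Finset.range n ×ˢ Finset.range n,
      (x p.1 - x p.2) * (y p.1 - y p.2) with hD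
  -- identity: D = 2nT - 2 Sx Sy
  have hDval : D = 2 * (n:ℝ) * T - 2 * Sx * Sy := by
    rw [hD, Finset.sum_product]
    have h1 : ∀ i ∈ Finset.range n, ∑ j ∈ Finset.range n,
        (x i - x j) * (y i - y j)
        = (n:ℝ) * (x i * y i) - x i * Sy - Sx * y i + T := by
      intro i _
      simp only [sub_mul, mul_sub, Finset.sum_sub_distrib, ← Finset.mul_sum,
        ← Finset.sum_mul, Finset.sum_const, Finset.card_range, nsmul_eq_mul,
        ← hSx, ← hSy, ← hT]
      ring
    rw [Finset.sum_congr rfl h1]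
    simp only [Finset.sum_add_distrib, Finset.sum_sub_distrib, ← Finset.mul_sum,
      ← Finset.sum_mul, Finset.sum_const, Finset.card_range, nsmul_eq_mul,
      ← hSx, ← hSy, ← hT]
    ring
  have hSval : (n:ℝ) * S = (n:ℝ) * T - Sx * Sy := by
    rw [hS]
    have h2 : ∀ i ∈ Finset.range n, (x i - Sx / n) * (y i - Sy / n)
        = x i * y i - x i * (Sy / n) - (Sx / n) * y i + (Sx / n) * (Sy / n) :=
      fun i _ => by ring
    rw [Finset.sum_congr rfl h2]
    simp only [Finset.sum_add_distrib, Finset.sum_sub_distrib, ← Finset.mul_sum,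
      ← Finset.sum_mul, Finset.sum_const, Finset.card_range, nsmul_eq_mul,
      ← hSx, ← hSy, ← hT]
    field_simp
    ring
  -- each term of D is nonneg
  have hterm : ∀ p ∈ Finset.range n ×ˢ Finset.range n,
      (0:ℝ) ≤ (x p.1 - x p.2) * (y p.1 - y p.2) := by
    rintro ⟨i, j⟩ hp
    simp only [Finset.mem_product, Finset.mem_range] at hp
    rcases le_total i j with h | h
    · have hx := hxmono i j h hp.2
      have hy := hymono i j h hp.2
      nlinarith
    · have hx := hxmono j i h hp.1
      have hy := hymono j i h hp.1
      exact mul_nonneg (by linarith) (by linarith)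
  have hne : ((0:ℕ), n - 1) ≠ (n - 1, 0) := by
    intro h
    have : n - 1 = 0 := (Prod.mk.injEq _ _ _ _).mp h |>.1.symm
    omega
  have hsub : ({((0:ℕ), n-1), (n-1, 0)} : Finset (ℕ × ℕ))
      ⊆ Finset.range n ×ˢ Finset.range n := by
    intro p hp
    simp only [Finset.mem_insert, Finset.mem_singleton] at hp
    rcases hp with h | h <;> subst h <;>
      simp [Finset.mem_product, Finset.mem_range] <;> omega
  have hDlb : 2 * ((x (n-1) - x 0) * (y (n-1) - y 0)) ≤ D := by
    have := Finset.sum_le_sum_of_subset_of_nonneg hsub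
      (fun p hp _ => hterm p hp)
    rw [Finset.sum_pair hne] at this
    calc 2 * ((x (n-1) - x 0) * (y (n-1) - y 0))
        = (x 0 - x (n-1)) * (y 0 - y (n-1))
          + (x (n-1) - x 0) * (y (n-1) - y 0) := by ring
      _ ≤ D := this
  rw [div_mul_eq_mul_div, div_mul_eq_mul_div, one_mul, div_le_iff₀ hn0]
  nlinarith [hDval, hSval, hDlb]
end

section
/- Let n = 2m + 1 with m ≥ 1 and suppose x_1 = ... = x_m < x_{m+1} = ... = x_n and y_1 = ... = y_m < y_{m+1} = ... = y_n (or, alternatively, x_1 = ... = x_{m+1} < x_{m+2} = ... = x_n and y_1 = ... = y_{m+1} < y_{m+2} = ... = y_n). Then Σ_{i=1}^n (x_i - x̄)(y_i - ȳ) = ((n² - 1)/(4n))·(x_n - x_1)(y_n - y_1); that is, the upper bound (n² - 1)/(4n) for s_{xy}/((x_n - x_1)(y_n - y_1)) is attained by these configurations. -/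
lemma split_sum_const (n k : ℕ) (hkn : k ≤ n) (x : ℕ → ℝ)
    (hx1 : ∀ i < k, x i = x 0) (hx2 : ∀ i, k ≤ i → i < n → x i = x (n - 1)) :
    ∑ j ∈ Finset.range n, x j = k * x 0 + (n - k : ℕ) * x (n - 1) := by
  have h := (Finset.sum_range_add_sum_Ico x hkn).symm
  rw [h]
  have h1 : ∑ j ∈ Finset.range k, x j = k * x 0 := by
    rw [Finset.sum_congr rfl fun i hi => hx1 i (Finset.mem_range.mp hi)]
    simp [mul_comm]
  have h2 : ∑ j ∈ Finset.Ico k n, x j = (n - k : ℕ) * x (n - 1) := by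
    rw [Finset.sum_congr rfl fun i hi => hx2 i (Finset.mem_Ico.mp hi).1 (Finset.mem_Ico.mp hi).2]
    simp [Nat.card_Ico, mul_comm]
  rw [h1, h2]

lemma aux_cov (n k : ℕ) (hkn : k ≤ n) (hn : 0 < n) (x y : ℕ → ℝ)
    (hx1 : ∀ i < k, x i = x 0) (hx2 : ∀ i, k ≤ i → i < n → x i = x (n - 1))
    (hy1 : ∀ i < k, y i = y 0) (hy2 : ∀ i, k ≤ i → i < n → y i = y (n - 1)) :
    ∑ i ∈ Finset.range n,
        (x i - (∑ j ∈ Finset.range n, x j) / n) *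
          (y i - (∑ j ∈ Finset.range n, y j) / n)
      = ((k : ℝ) * (n - k : ℕ) / n) * (x (n - 1) - x 0) * (y (n - 1) - y 0) := by
  have hsx := split_sum_const n k hkn x hx1 hx2
  have hsy := split_sum_const n k hkn y hy1 hy2
  rw [hsx, hsy]
  rw [(Finset.sum_range_add_sum_Ico _ hkn).symm]
  have h1 : ∑ i ∈ Finset.range k,
      (x i - ((k : ℝ) * x 0 + (n - k : ℕ) * x (n - 1)) / n) *
        (y i - ((k : ℝ) * y 0 + (n - k : ℕ) * y (n - 1)) / n)
      = k * ((x 0 - ((k : ℝ) * x 0 + (n - k : ℕ) * x (n - 1)) / n) *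
        (y 0 - ((k : ℝ) * y 0 + (n - k : ℕ) * y (n - 1)) / n)) := by
    rw [Finset.sum_congr rfl fun i hi => by
      rw [hx1 i (Finset.mem_range.mp hi), hy1 i (Finset.mem_range.mp hi)]]
    simp [mul_comm]
  have h2 : ∑ i ∈ Finset.Ico k n,
      (x i - ((k : ℝ) * x 0 + (n - k : ℕ) * x (n - 1)) / n) *
        (y i - ((k : ℝ) * y 0 + (n - k : ℕ) * y (n - 1)) / n)
      = (n - k : ℕ) * ((x (n-1) - ((k : ℝ) * x 0 + (n - k : ℕ) * x (n - 1)) / n) *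
        (y (n-1) - ((k : ℝ) * y 0 + (n - k : ℕ) * y (n - 1)) / n)) := by
    rw [Finset.sum_congr rfl fun i hi => by
      rw [hx2 i (Finset.mem_Ico.mp hi).1 (Finset.mem_Ico.mp hi).2,
          hy2 i (Finset.mem_Ico.mp hi).1 (Finset.mem_Ico.mp hi).2]]
    simp [Nat.card_Ico, mul_comm]
  rw [h1, h2]
  have hnk : ((n - k : ℕ) : ℝ) = (n : ℝ) - k := by
    rw [Nat.cast_sub hkn]
  have hn0 : (n : ℝ) ≠ 0 := Nat.cast_ne_zero.mpr hn.ne'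
  rw [hnk]
  field_simp
  ring

/-- For `n = 2m+1`, `m ≥ 1`, if both `x` and `y` split at `m`
(`x_1 = ⋯ = x_m < x_{m+1} = ⋯ = x_n` and likewise for `y`), or both split at `m+1`
(`x_1 = ⋯ = x_{m+1} < x_{m+2} = ⋯ = x_n` and likewise for `y`), then
`∑ (x i - x̄)(y i - ȳ) = ((n²-1)/(4n))(x (n-1) - x 0)(y (n-1) - y 0)`. -/
theorem bivariate_upper_bound_odd_attained
    (n m : ℕ) (hm : 1 ≤ m) (hnm : n = 2 * m + 1) (x y : ℕ → ℝ)
    (hconf :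
      ((∀ i < m, x i = x 0) ∧ (∀ i, m ≤ i → i < n → x i = x (n - 1)) ∧
       (∀ i < m, y i = y 0) ∧ (∀ i, m ≤ i → i < n → y i = y (n - 1))) ∨
      ((∀ i < m + 1, x i = x 0) ∧ (∀ i, m + 1 ≤ i → i < n → x i = x (n - 1)) ∧
       (∀ i < m + 1, y i = y 0) ∧ (∀ i, m + 1 ≤ i → i < n → y i = y (n - 1))))
    (hxlt : x 0 < x (n - 1)) (hylt : y 0 < y (n - 1)) :
    ∑ i ∈ Finset.range n,
        (x i - (∑ j ∈ Finset.range n, x j) / n) *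
          (y i - (∑ j ∈ Finset.range n, y j) / n)
      = (((n : ℝ) ^ 2 - 1) / (4 * n)) * (x (n - 1) - x 0) * (y (n - 1) - y 0) := by
  have hn : 0 < n := by omega
  have hn0 : (n : ℝ) ≠ 0 := Nat.cast_ne_zero.mpr hn.ne'
  rcases hconf with ⟨hx1, hx2, hy1, hy2⟩ | ⟨hx1, hx2, hy1, hy2⟩
  · rw [aux_cov n m (by omega) hn x y hx1 hx2 hy1 hy2]
    have h1 : ((n - m : ℕ) : ℝ) = m + 1 := by
      have : n - m = m + 1 := by omega
      rw [this]; push_cast; ring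
    have h2 : (n : ℝ) = 2 * m + 1 := by rw [hnm]; push_cast; ring
    rw [h1, h2]
    field_simp
    ring
  · rw [aux_cov n (m+1) (by omega) hn x y hx1 hx2 hy1 hy2]
    have h1 : ((n - (m+1) : ℕ) : ℝ) = m := by
      have : n - (m+1) = m := by omega
      rw [this]
    have h2 : (n : ℝ) = 2 * m + 1 := by rw [hnm]; push_cast; ring
    rw [h1, h2]
    push_cast
    field_simp
    ring
end

section
/- Let n ≥ 2 and suppose x_1 < x_2 = ... = x_n and y_1 = y_2 = ... = y_{n-1} < y_n (or, symmetrically, x_1 = ... = x_{n-1} < x_n and y_1 < y_2 = ... = y_n). Then Σ_{i=1}^n (x_i - x̄)(y_i - ȳ) = (1/n)·(x_n - x_1)(y_n - y_1); that is, the lower bound 1/n for s_{xy}/((x_n - x_1)(y_n - y_1)) is attained by these configurations. -/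
lemma helper13 (m : ℕ) (x y : ℕ → ℝ)
    (hx : ∀ i, 1 ≤ i → i < m + 2 → x i = x (m + 1))
    (hy : ∀ i < m + 1, y i = y 0) :
    ∑ i ∈ Finset.range (m + 2),
        (x i - (∑ j ∈ Finset.range (m + 2), x j) / (m + 2)) *
          (y i - (∑ j ∈ Finset.range (m + 2), y j) / (m + 2))
      = (1 / ((m : ℝ) + 2)) * (x (m + 1) - x 0) * (y (m + 1) - y 0) := by
  have hsplit : ∀ f : ℕ → ℝ, ∑ i ∈ Finset.range (m + 2), f i
      = f 0 + (∑ i ∈ Finset.Ico 1 (m + 1), f i) + f (m + 1) := by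
    intro f
    rw [Finset.sum_range_succ, Finset.range_eq_Ico,
      Finset.sum_eq_sum_Ico_succ_bot (by omega)]
  have hsx : ∑ j ∈ Finset.range (m + 2), x j = x 0 + m * x (m + 1) + x (m + 1) := by
    rw [hsplit]
    congr 1
    congr 1
    rw [Finset.sum_congr rfl (fun i hi => by
      simp only [Finset.mem_Ico] at hi
      exact hx i hi.1 (by omega)), Finset.sum_const, Nat.card_Ico]
    simp
  have hsy : ∑ j ∈ Finset.range (m + 2), y j = y 0 + m * y 0 + y (m + 1) := by
    rw [hsplit]
    congr 1
    congr 1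
    rw [Finset.sum_congr rfl (fun i hi => by
      simp only [Finset.mem_Ico] at hi
      exact hy i hi.2), Finset.sum_const, Nat.card_Ico]
    simp
  rw [hsplit, hsx, hsy]
  rw [Finset.sum_congr rfl (fun i hi => by
    simp only [Finset.mem_Ico] at hi
    rw [hx i hi.1 (by omega), hy i hi.2]), Finset.sum_const, Nat.card_Ico]
  simp only [Nat.add_sub_cancel, nsmul_eq_mul]
  have h2 : ((m : ℝ) + 2) ≠ 0 := by positivity
  field_simp
  ring

/-- For `n ≥ 2`, if `x_1 < x_2 = ⋯ = x_n` and
`y_1 = ⋯ = y_{n-1} < y_n` (or symmetrically with the roles of `x` and `y`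
exchanged), then `∑ (x i - x̄)(y i - ȳ) = (1/n)(x (n-1) - x 0)(y (n-1) - y 0)`. -/
theorem bivariate_lower_bound_attained
    (n : ℕ) (hn : 2 ≤ n) (x y : ℕ → ℝ)
    (hconf :
      ((∀ i, 1 ≤ i → i < n → x i = x (n - 1)) ∧ x 0 < x (n - 1) ∧
       (∀ i < n - 1, y i = y 0) ∧ y 0 < y (n - 1)) ∨
      ((∀ i < n - 1, x i = x 0) ∧ x 0 < x (n - 1) ∧
       (∀ i, 1 ≤ i → i < n → y i = y (n - 1)) ∧ y 0 < y (n - 1))) :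
    ∑ i ∈ Finset.range n,
        (x i - (∑ j ∈ Finset.range n, x j) / n) *
          (y i - (∑ j ∈ Finset.range n, y j) / n)
      = (1 / (n : ℝ)) * (x (n - 1) - x 0) * (y (n - 1) - y 0) := by
  obtain ⟨m, rfl⟩ : ∃ m, n = m + 2 := ⟨n - 2, by omega⟩
  have hm1 : m + 2 - 1 = m + 1 := by omega
  rw [hm1] at hconf ⊢
  push_cast
  rcases hconf with ⟨hx, _, hy, _⟩ | ⟨hx, _, hy, _⟩
  · exact helper13 m x y hx hy
  · have := helper13 m y x hy hx
    calc ∑ i ∈ Finset.range (m + 2),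
        (x i - (∑ j ∈ Finset.range (m + 2), x j) / ((m : ℝ) + 2)) *
          (y i - (∑ j ∈ Finset.range (m + 2), y j) / ((m : ℝ) + 2))
        = ∑ i ∈ Finset.range (m + 2),
        (y i - (∑ j ∈ Finset.range (m + 2), y j) / ((m : ℝ) + 2)) *
          (x i - (∑ j ∈ Finset.range (m + 2), x j) / ((m : ℝ) + 2)) := by
          exact Finset.sum_congr rfl fun i _ => mul_comm _ _
      _ = (1 / ((m : ℝ) + 2)) * (y (m + 1) - y 0) * (x (m + 1) - x 0) := this
      _ = (1 / ((m : ℝ) + 2)) * (x (m + 1) - x 0) * (y (m + 1) - y 0) := by ring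
end
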